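/- Let f ∈ End(R^{n-1}) have, with respect to some basis, the block form f = (A 0; B C) with A ∈ R^{p×p}, B ∈ R^{(n-p-1)×p}, C ∈ R^{(n-p-1)×(n-p-1)}. Then the almost Abelian Lie algebra g_f = R^{n-1} ⋊_f R admits a product structure of signature (p, n-p): an endomorphism E of g_f with E^2 = id, +1-eigenspace of dimension p, -1-eigenspace of dimension n-p, and vanishing Nijenhuis tensor, such that the ideal R^{n-1} is E-invariant. -/

import Mathlib

/-- The Lie bracket of the almost Abelian Lie algebra `g_f = ℝ^k ⋊_f ℝ`. -/
def aaBr {k : ℕ} (f : Module.End ℝ (Fin k → ℝ)) :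
    ((Fin k → ℝ) × ℝ) → ((Fin k → ℝ) × ℝ) → ((Fin k → ℝ) × ℝ) :=
  fun x y => (x.2 • f y.1 - y.2 • f x.1, 0)

open Module Submodule

section aux
set_option linter.unusedSectionVars false
variable {ι V : Type*} [Fintype ι] [DecidableEq ι] [AddCommGroup V] [Module ℝ V]

lemma repr_diag (B : Basis ι ℝ V) (ε : ι → ℝ) (E : Module.End ℝ V)
    (hE : ∀ i, E (B i) = ε i • B i) (x : V) (i : ι) :
    B.repr (E x) i = ε i * B.repr x i := by
  have h : ((Finsupp.lapply i : (ι →₀ ℝ) →ₗ[ℝ] ℝ).comp (B.repr.toLinearMap.comp E))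
      = (ε i) • ((Finsupp.lapply i : (ι →₀ ℝ) →ₗ[ℝ] ℝ).comp B.repr.toLinearMap) := by
    apply B.ext; intro j
    simp [hE j, Finsupp.single_apply]
    rcases eq_or_ne j i with rfl | hne
    · simp
    · simp [hne]
  simpa using LinearMap.congr_fun h x

lemma eig_diag (B : Basis ι ℝ V) (ε : ι → ℝ) (E : Module.End ℝ V)
    (hE : ∀ i, E (B i) = ε i • B i) (μ : ℝ) :
    Module.End.eigenspace E μ = span ℝ (B '' {i | ε i = μ}) := by
  ext x
  rw [Module.End.mem_eigenspace_iff, Basis.mem_span_image]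
  constructor
  · intro h i hi
    simp only [Finset.mem_coe, Finsupp.mem_support_iff] at hi
    have h2 : B.repr (E x) i = B.repr (μ • x) i := by rw [h]
    rw [repr_diag B ε E hE, map_smul, Finsupp.smul_apply, smul_eq_mul] at h2
    exact mul_right_cancel₀ hi h2
  · intro h
    apply B.repr.injective
    ext i
    rw [repr_diag B ε E hE, map_smul, Finsupp.smul_apply, smul_eq_mul]
    rcases eq_or_ne (B.repr x i) 0 with h0 | h0
    · simp [h0]
    · rw [h (Finsupp.mem_support_iff.2 h0)]

lemma rank_span_comp {κ : Type*} [Fintype κ] (B : Basis ι ℝ V) (e : κ → ι)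
    (he : Function.Injective e) :
    finrank ℝ (span ℝ (B '' Set.range e)) = Fintype.card κ := by
  rw [← Set.range_comp]
  exact finrank_span_eq_card (B.linearIndependent.comp e he)

end aux

theorem stmt_10 (p' q' : ℕ) (f : Module.End ℝ (Fin (p'+q'+1) → ℝ))
    (hf : ∃ b : Basis (Fin (p'+q'+1)) ℝ (Fin (p'+q'+1) → ℝ),
      ∀ i j : Fin (p'+q'+1), (i : ℕ) < p'+1 → p'+1 ≤ (j : ℕ) →
        b.repr (f (b j)) i = 0) :
    ∃ E : Module.End ℝ ((Fin (p'+q'+1) → ℝ) × ℝ),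
      E * E = 1 ∧
      Module.finrank ℝ ↥(Module.End.eigenspace E 1) = p' + 1 ∧
      Module.finrank ℝ ↥(Module.End.eigenspace E (-1)) = q' + 1 ∧
      (∀ x y, aaBr f (E x) (E y) - E (aaBr f (E x) y + aaBr f x (E y)) + aaBr f x y = 0) ∧
      (∀ u : Fin (p'+q'+1) → ℝ, (E (u, 0)).2 = 0) := by
  classical
  obtain ⟨b, hb⟩ := hf
  set εV : Fin (p'+q'+1) → ℝ := fun i => if (i : ℕ) < p'+1 then 1 else -1 with hεV
  set S : Module.End ℝ (Fin (p'+q'+1) → ℝ) := b.constr ℝ (fun i => εV i • b i) with hSdef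
  have hSb : ∀ i, S (b i) = εV i • b i := fun i => b.constr_basis _ _ i
  set E : Module.End ℝ ((Fin (p'+q'+1) → ℝ) × ℝ) :=
    S.prodMap (-LinearMap.id) with hEdef
  have hEapp : ∀ (u : Fin (p'+q'+1) → ℝ) (t : ℝ), E (u, t) = (S u, -t) := by
    intro u t; simp [hEdef]
  set B := b.prod (Basis.singleton Unit ℝ) with hBdef
  set ε : Fin (p'+q'+1) ⊕ Unit → ℝ := Sum.elim εV (fun _ => -1) with hεdef
  have hBinl : ∀ i, B (Sum.inl i) = (b i, 0) := by intro i; simp [hBdef]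
  have hBinr : B (Sum.inr ()) = (0, 1) := by simp [hBdef]
  have hEB : ∀ i, E (B i) = ε i • B i := by
    rintro (i | ⟨⟩)
    · rw [hBinl, hEapp]
      simp [hεdef, hSb, Prod.smul_def]
    · rw [hBinr, hEapp]
      simp [hεdef, Prod.smul_def]
  -- key property of S on the "negative" part
  have hneg : ∀ j : Fin (p'+q'+1), p'+1 ≤ (j : ℕ) → S (f (b j)) = -(f (b j)) := by
    intro j hj
    apply b.repr.injective
    ext i
    rw [repr_diag b εV S hSb, map_neg, Finsupp.neg_apply]
    by_cases hi : (i : ℕ) < p'+1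
    · rw [hb i j hi hj]; ring
    · simp [hεV, hi, show ¬ (i : ℕ) ≤ p' by omega]
  have hkey : ∀ w, S (f (S w)) = f w + S (f w) - f (S w) := by
    have h : (S * (f * S) : Module.End ℝ _) = f + S * f - f * S := by
      apply b.ext; intro j
      by_cases hj : (j : ℕ) < p'+1
      · have hSj : S (b j) = b j := by rw [hSb]; simp [hεV, hj, show ¬ p' < (j : ℕ) by omega]
        simp [Module.End.mul_apply, hSj]
      · have hSj : S (b j) = -(b j) := by rw [hSb]; simp [hεV, hj, show ¬ (j : ℕ) ≤ p' by omega]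
        have hn := hneg j (le_of_not_gt hj)
        simp [Module.End.mul_apply, hSj, hn]
    intro w
    have := LinearMap.congr_fun h w
    simpa [Module.End.mul_apply] using this
  refine ⟨E, ?_, ?_, ?_, ?_, ?_⟩
  · -- E * E = 1
    apply B.ext; intro i
    rw [Module.End.mul_apply, hEB, map_smul, hEB, smul_smul, Module.End.one_apply]
    have : ε i * ε i = 1 := by
      rcases i with i | u <;> simp [hεdef, hεV] <;> split_ifs <;> norm_num
    rw [this, one_smul]
  · -- finrank of eigenspace 1
    rw [eig_diag B ε E hEB 1]
    have hset : {i | ε i = 1} =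
        Set.range (fun j : Fin (p'+1) => (Sum.inl ⟨(j : ℕ), by omega⟩ : Fin (p'+q'+1) ⊕ Unit)) := by
      ext (i | u)
      · simp only [Set.mem_setOf_eq, hεdef, Sum.elim_inl, Set.mem_range, hεV]
        constructor
        · intro h
          have hi : (i : ℕ) < p'+1 := by by_contra hc; simp [hc] at h; linarith
          exact ⟨⟨(i : ℕ), hi⟩, by simp⟩
        · rintro ⟨j, hj⟩
          obtain rfl : (⟨(j : ℕ), by omega⟩ : Fin (p'+q'+1)) = i := Sum.inl.inj hj
          simp [show ¬ p' < (j : ℕ) by have := j.isLt; omega]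
      · simp [hεdef]
        norm_num
    rw [hset, rank_span_comp B _ (fun j₁ j₂ h => by
      simpa [Fin.ext_iff] using h)]
    simp
  · -- finrank of eigenspace -1
    rw [eig_diag B ε E hEB (-1)]
    have hset : {i | ε i = -1} =
        Set.range (Sum.map (fun j : Fin q' => (⟨p'+1+(j : ℕ), by omega⟩ : Fin (p'+q'+1)))
          (id : Unit → Unit)) := by
      ext (i | u)
      · simp only [Set.mem_setOf_eq, hεdef, Sum.elim_inl, Set.mem_range, hεV]
        constructor
        · intro h
          have hi : ¬ (i : ℕ) < p'+1 := by
            intro hc; simp [hc] at h; linarith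
          refine ⟨Sum.inl ⟨(i : ℕ) - (p'+1), by omega⟩, ?_⟩
          simp [Sum.map, Fin.ext_iff]
          omega
        · rintro ⟨(j | u), hj⟩
          · obtain rfl : (⟨p'+1+(j : ℕ), by omega⟩ : Fin (p'+q'+1)) = i := Sum.inl.inj hj
            simp [show ¬ p' + 1 + (j : ℕ) ≤ p' by omega]
          · simp [Sum.map] at hj
      · simp [hεdef]
    have hinj : Function.Injective (Sum.map (fun j : Fin q' => (⟨p'+1+(j : ℕ), by omega⟩ : Fin (p'+q'+1))) (id : Unit → Unit)) := by
      rintro (j₁ | u₁) (j₂ | u₂) h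
      · simp [Sum.map, Fin.ext_iff] at h
        simp [Fin.ext_iff]
        omega
      · simp [Sum.map] at h
      · simp [Sum.map] at h
      · rfl
    rw [hset, rank_span_comp B _ hinj]
    simp
  · -- Nijenhuis
    rintro ⟨u, a⟩ ⟨v, c⟩
    rw [hEapp u a, hEapp v c]
    have h2 : aaBr f (S u, -a) (v, c) + aaBr f (u, a) (S v, -c)
        = ((-a) • f v - c • f (S u) + (a • f (S v) - (-c) • f u), (0 : ℝ)) := by
      simp [aaBr, Prod.ext_iff]
    rw [h2, hEapp]
    rw [Prod.ext_iff]
    constructor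
    · show (-a) • f (S v) - (-c) • f (S u) -
        S ((-a) • f v - c • f (S u) + (a • f (S v) - (-c) • f u)) + (a • f v - c • f u) = 0
      simp only [map_add, map_sub, map_smul, map_neg]
      rw [hkey u, hkey v]
      module
    · show (0 : ℝ) - -0 + 0 = 0
      norm_num
  · intro u
    rw [hEapp]
    norm_num
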